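/- Let H be a real Hilbert space, E a nonempty closed convex subset of H, and f : E × E → ℝ a bifunction satisfying conditions (A1)–(A4). Then for every r > 0 and every x ∈ H there exists z ∈ E such that f(z, y) + (1/r)⟨y − z, z − x⟩ ≥ 0 for all y ∈ E. -/

import Mathlib

open Filter Set RealInnerProductSpace
open scoped Topology

section AuxiliaryLemmas

variable {H : Type*} [NormedAddCommGroup H] [InnerProductSpace ℝ H]

/-- Two closed convex sets covering a segment with endpoints in each must meet. -/
lemma seg_meet {C D : Set H} (hCc : IsClosed C) (hDc : IsClosed D)
    {a b : H} (ha : a ∈ C) (hb : b ∈ D) (hseg : segment ℝ a b ⊆ C ∪ D) :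
    (segment ℝ a b ∩ (C ∩ D)).Nonempty := by
  set γ : ℝ → H := fun t => (1 - t) • a + t • b with hγ
  have hγc : Continuous γ := by fun_prop
  have hγm : ∀ t ∈ Icc (0:ℝ) 1, γ t ∈ segment ℝ a b := by
    intro t ht
    rw [segment_eq_image']
    exact ⟨t, ht, by simp only [hγ]; module⟩
  set S : Set ℝ := {t ∈ Icc (0:ℝ) 1 | γ t ∈ C} with hS
  have hScl : IsClosed S := (isClosed_Icc.inter (hCc.preimage hγc))
  have hSne : S.Nonempty := ⟨0, ⟨le_refl _, zero_le_one⟩, by simpa [hγ] using ha⟩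
  have hSbd : BddAbove S := ⟨1, fun t ht => ht.1.2⟩
  set m := sSup S with hm
  have hmS : m ∈ S := hScl.csSup_mem hSne hSbd
  have hm01 : m ∈ Icc (0:ℝ) 1 := hmS.1
  refine ⟨γ m, hγm m hm01, hmS.2, ?_⟩
  -- γ m ∈ D
  rcases eq_or_lt_of_le hm01.2 with h1 | h1
  · have : γ m = b := by simp [hγ, h1]
    rw [this]; exact hb
  · -- points just above m are in D
    have hsub : Ioc m 1 ⊆ {t ∈ Icc (0:ℝ) 1 | γ t ∈ D} := by
      intro t ht
      have ht01 : t ∈ Icc (0:ℝ) 1 := ⟨le_trans hm01.1 (le_of_lt ht.1), ht.2⟩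
      have : γ t ∈ C ∪ D := hseg (hγm t ht01)
      rcases this with h | h
      · exact absurd (le_csSup hSbd ⟨ht01, h⟩) (not_le.2 ht.1)
      · exact ⟨ht01, h⟩
    have hTcl : IsClosed {t ∈ Icc (0:ℝ) 1 | γ t ∈ D} := isClosed_Icc.inter (hDc.preimage hγc)
    have : m ∈ closure (Ioc m 1) := by
      rw [closure_Ioc (ne_of_lt h1)]; exact ⟨le_refl _, le_of_lt h1⟩
    have := hTcl.closure_subset ((closure_mono hsub) this)
    exact this.2

lemma mem_segment_param {a b : H} {t : ℝ} (ht : t ∈ Icc (0:ℝ) 1) :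
    (1 - t) • a + t • b ∈ segment ℝ a b := by
  rw [segment_eq_image']
  exact ⟨t, ht, by module⟩

/-- Berge's intersection theorem: compact convex sets with convex union such that
every subfamily obtained by removing one set has a common point, have a common point. -/
lemma berge [DecidableEq H] : ∀ (n : ℕ) (s : Finset H) (C : H → Set H), s.card = n → s.Nonempty →
    (∀ i ∈ s, IsCompact (C i)) → (∀ i ∈ s, Convex ℝ (C i)) →
    Convex ℝ (⋃ i ∈ s, C i) →
    (∀ i ∈ s, (⋂ j ∈ s.erase i, C j).Nonempty) →
    (∀ i ∈ s, (C i).Nonempty) →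
    (⋂ i ∈ s, C i).Nonempty := by
  intro n
  induction n with
  | zero =>
    intro s C hcard hne
    exact absurd (Finset.card_eq_zero.mp hcard) (Finset.nonempty_iff_ne_empty.mp hne)
  | succ n ih =>
    intro s C hcard hne hcomp hconv hUconv hmeet hCne
    rcases Nat.eq_zero_or_pos n with hn0 | hnpos
    · -- card = 1
      subst hn0
      obtain ⟨i, rfl⟩ := Finset.card_eq_one.mp hcard
      simpa using hCne i (by simp)
    rcases Nat.lt_or_ge n 2 with hn1 | hn2
    · -- card = 2
      have hn : n = 1 := by omega
      subst hn
      obtain ⟨i, j, hij, rfl⟩ := Finset.card_eq_two.mp hcard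
      have herasei : ({i, j} : Finset H).erase i = {j} := by
        rw [Finset.erase_insert (by simp [hij])]
      have herasej : ({i, j} : Finset H).erase j = {i} := by
        rw [Finset.erase_insert_of_ne hij, Finset.erase_singleton]; rfl
      obtain ⟨a, ha⟩ := hmeet i (by simp)
      rw [herasei] at ha
      have haj : a ∈ C j := by simpa using ha
      obtain ⟨b, hb⟩ := hmeet j (by simp)
      rw [herasej] at hb
      have hbi : b ∈ C i := by simpa using hb
      have hU : (⋃ k ∈ ({i, j} : Finset H), C k) = C i ∪ C j := by simp
      rw [hU] at hUconv
      have hseg : segment ℝ b a ⊆ C i ∪ C j :=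
        hUconv.segment_subset (Set.mem_union_left _ hbi) (Set.mem_union_right _ haj)
      obtain ⟨w, _, hwi, hwj⟩ := seg_meet ((hcomp i (by simp)).isClosed)
        ((hcomp j (by simp)).isClosed) hbi haj hseg
      exact ⟨w, by simp [Set.mem_iInter]; exact ⟨hwi, hwj⟩⟩
    · -- card = n+1 ≥ 3
      obtain ⟨k, hk⟩ := hne
      set s' := s.erase k with hs'
      have hs'card : s'.card = n := by rw [hs', Finset.card_erase_of_mem hk, hcard]; omega
      have hs'ne : s'.Nonempty := Finset.card_pos.mp (by omega)
      have hs'sub : ∀ j ∈ s', j ∈ s := fun j hj => Finset.mem_of_mem_erase hj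
      set A := ⋂ j ∈ s', C j with hA
      have hAne : A.Nonempty := hmeet k hk
      obtain ⟨j₀, hj₀⟩ := hs'ne
      have hAcl : IsClosed A :=
        isClosed_biInter (fun j hj => (hcomp j (hs'sub j hj)).isClosed)
      have hAcomp : IsCompact A :=
        (hcomp j₀ (hs'sub j₀ hj₀)).of_isClosed_subset hAcl
          (Set.biInter_subset_of_mem hj₀)
      have hAconv : Convex ℝ A :=
        convex_iInter₂ (fun j hj => hconv j (hs'sub j hj))
      by_cases hAB : (A ∩ C k).Nonempty
      · obtain ⟨w, hwA, hwk⟩ := hAB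
        refine ⟨w, ?_⟩
        rw [← Finset.insert_erase hk, Finset.set_biInter_insert]
        exact ⟨hwk, hwA⟩
      · have hdisj : Disjoint A (C k) :=
          Set.disjoint_iff_inter_eq_empty.mpr (Set.not_nonempty_iff_eq_empty.mp hAB)
        obtain ⟨ℓ, u, v, hu, huv, hv⟩ := geometric_hahn_banach_compact_closed hAconv hAcomp
          (hconv k hk) (hcomp k hk).isClosed hdisj
        set c := (u + v) / 2 with hc
        have hcu : u < c := by rw [hc]; linarith
        have hcv : c < v := by rw [hc]; linarith
        set P : Set H := {z | ℓ z = c} with hP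
        have hPcl : IsClosed P := isClosed_eq ℓ.continuous continuous_const
        have hPconv : Convex ℝ P := by
          intro z1 h1 z2 h2 a b ha hb hab
          simp only [hP, Set.mem_setOf_eq] at h1 h2 ⊢
          simp [h1, h2, ← add_mul, hab]
        set C' : H → Set H := fun i => C i ∩ P with hC'
        -- every (n-1)-subfamily of the new family has a common point
        have hmeet' : ∀ k' ∈ s', (⋂ j ∈ s'.erase k', C' j).Nonempty := by
          intro k' hk'
          obtain ⟨a, haA⟩ := hAne
          obtain ⟨b, hb⟩ := hmeet k' (hs'sub k' hk')
          have hkk' : k ≠ k' := fun h => (Finset.mem_erase.mp hk').1 h.symm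
          have hbk : b ∈ C k :=
            Set.mem_iInter₂.mp hb k (Finset.mem_erase.mpr ⟨hkk', hk⟩)
          have hℓa : ℓ a < u := hu a haA
          have hℓb : v < ℓ b := hv b hbk
          -- IVT along the segment from a to b
          have hgc : Continuous fun t : ℝ => ℓ ((1 - t) • a + t • b) := by fun_prop
          have hivt : c ∈ (fun t : ℝ => ℓ ((1 - t) • a + t • b)) '' Icc 0 1 := by
            apply intermediate_value_Icc zero_le_one hgc.continuousOn
            constructor
            · simpa using le_of_lt (lt_trans hℓa hcu)
            · simpa using le_of_lt (lt_trans hcv hℓb)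
          obtain ⟨t0, ht0, hgt0⟩ := hivt
          set w := (1 - t0) • a + t0 • b with hw
          refine ⟨w, Set.mem_biInter ?_⟩
          intro j hj
          have hj' : j ∈ s' := Finset.mem_of_mem_erase hj
          have hjk' : j ≠ k' := (Finset.mem_erase.mp hj).1
          have haj : a ∈ C j := Set.mem_iInter₂.mp haA j hj'
          have hbj : b ∈ C j :=
            Set.mem_iInter₂.mp hb j
              (Finset.mem_erase.mpr ⟨hjk', hs'sub j hj'⟩)
          refine ⟨(hconv j (hs'sub j hj')).segment_subset haj hbj
            (mem_segment_param ht0), hgt0⟩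
        -- nonemptiness of the sets in the new family
        have hCne' : ∀ i ∈ s', (C' i).Nonempty := by
          intro i hi
          obtain ⟨k'', hk'', hkne⟩ := Finset.exists_mem_ne (s := s') (by rw [hs'card]; omega) i
          obtain ⟨w, hw⟩ := hmeet' k'' hk''
          exact ⟨w, Set.mem_iInter₂.mp hw i (Finset.mem_erase.mpr ⟨fun h => hkne h.symm, hi⟩)⟩
        -- union of the new family is convex
        have hU' : (⋃ i ∈ s', C' i) = (⋃ i ∈ s, C i) ∩ P := by
          ext w
          constructor
          · rintro hw
            obtain ⟨i, hi, hwi, hwP⟩ := Set.mem_iUnion₂.mp hw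
            exact ⟨Set.mem_biUnion (hs'sub i hi) hwi, hwP⟩
          · rintro ⟨hw1, hw2⟩
            obtain ⟨i, hi, hwi⟩ := Set.mem_iUnion₂.mp hw1
            rcases eq_or_ne i k with rfl | hik
            · exact absurd hw2 (by simp only [hP, Set.mem_setOf_eq]; exact ne_of_gt (lt_trans hcv (hv w hwi)))
            · exact Set.mem_biUnion (Finset.mem_erase.mpr ⟨hik, hi⟩) ⟨hwi, hw2⟩
        have hU'conv : Convex ℝ (⋃ i ∈ s', C' i) := by
          rw [hU']; exact hUconv.inter hPconv
        -- apply induction hypothesis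
        obtain ⟨w, hwmem⟩ := ih s' C' hs'card ⟨j₀, hj₀⟩
          (fun i hi => (hcomp i (hs'sub i hi)).inter_right hPcl)
          (fun i hi => (hconv i (hs'sub i hi)).inter hPconv)
          hU'conv hmeet' hCne'
        -- contradiction with the separation
        have hwA : w ∈ A := Set.mem_biInter (fun j hj => (Set.mem_iInter₂.mp hwmem j hj).1)
        have hwP : ℓ w = c := (Set.mem_iInter₂.mp hwmem j₀ hj₀).2
        have := hu w hwA
        rw [hwP] at this
        exact absurd this (not_lt.mpr (le_of_lt hcu))

/-- KKM theorem for closed *convex* sets (via Berge's intersection theorem). -/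
lemma kkm [DecidableEq H] : ∀ (n : ℕ) (s : Finset H) (C : H → Set H), s.card = n → s.Nonempty →
    (∀ y ∈ s, IsClosed (C y)) → (∀ y ∈ s, Convex ℝ (C y)) →
    (∀ t : Finset H, t ⊆ s → ∀ z ∈ convexHull ℝ (t : Set H), ∃ y ∈ t, z ∈ C y) →
    (convexHull ℝ (s : Set H) ∩ ⋂ y ∈ s, C y).Nonempty := by
  intro n
  induction n with
  | zero =>
    intro s C hcard hne
    exact absurd (Finset.card_eq_zero.mp hcard) (Finset.nonempty_iff_ne_empty.mp hne)
  | succ n ih =>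
    intro s C hcard hne hcl hconv hKKM
    rcases Nat.eq_zero_or_pos n with hn0 | hnpos
    · subst hn0
      obtain ⟨y, rfl⟩ := Finset.card_eq_one.mp hcard
      have hyh : y ∈ convexHull ℝ (({y} : Finset H) : Set H) :=
        subset_convexHull ℝ _ (by simp)
      obtain ⟨y', hy', hyC⟩ := hKKM {y} (le_refl _) y hyh
      have he : y' = y := by simpa using hy'
      rw [he] at hyC
      exact ⟨y, hyh, by simpa using hyC⟩
    · set D : H → Set H := fun y => C y ∩ convexHull ℝ (s : Set H) with hD
      have hhullcomp : IsCompact (convexHull ℝ (s : Set H)) :=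
        s.finite_toSet.isCompact_convexHull ℝ
      have hmeet : ∀ y ∈ s, (⋂ j ∈ s.erase y, D j).Nonempty := by
        intro y hy
        have hecard : (s.erase y).card = n := by
          rw [Finset.card_erase_of_mem hy, hcard]; omega
        have hene : (s.erase y).Nonempty := Finset.card_pos.mp (by omega)
        obtain ⟨w, hwhull, hwint⟩ := ih (s.erase y) C hecard hene
          (fun j hj => hcl j (Finset.mem_of_mem_erase hj))
          (fun j hj => hconv j (Finset.mem_of_mem_erase hj))
          (fun t ht => hKKM t (ht.trans (Finset.erase_subset _ _)))
        refine ⟨w, Set.mem_biInter fun j hj => ⟨Set.mem_iInter₂.mp hwint j hj, ?_⟩⟩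
        exact convexHull_mono (Finset.coe_subset.mpr (Finset.erase_subset _ _)) hwhull
      have hDne : ∀ y ∈ s, (D y).Nonempty := by
        intro y hy
        have hyh : y ∈ convexHull ℝ (({y} : Finset H) : Set H) :=
          subset_convexHull ℝ _ (by simp)
        obtain ⟨y', hy', hyC⟩ := hKKM {y} (Finset.singleton_subset_iff.mpr hy) y hyh
        have he : y' = y := by simpa using hy'
        rw [he] at hyC
        exact ⟨y, hyC, subset_convexHull ℝ _ (by simpa using hy)⟩
      have hUD : (⋃ y ∈ s, D y) = convexHull ℝ (s : Set H) := by
        apply Set.Subset.antisymm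
        · exact Set.iUnion₂_subset fun y hy => Set.inter_subset_right
        · intro z hz
          obtain ⟨y, hy, hzy⟩ := hKKM s (le_refl _) z hz
          exact Set.mem_biUnion hy ⟨hzy, hz⟩
      obtain ⟨w, hw⟩ := berge (n + 1) s D hcard hne
        (fun y hy => hhullcomp.inter_left (hcl y hy))
        (fun y hy => (hconv y hy).inter (convex_convexHull ℝ _))
        (by rw [hUD]; exact convex_convexHull ℝ _)
        hmeet hDne
      obtain ⟨y₀, hy₀⟩ := hne
      exact ⟨w, (Set.mem_iInter₂.mp hw y₀ hy₀).2,
        Set.mem_biInter fun y hy => (Set.mem_iInter₂.mp hw y hy).1⟩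

/-- A convex lsc function on a closed convex set has a continuous affine minorant. -/
lemma exists_affine_minorant {E : Set H} (hEcl : IsClosed E) {g : H → ℝ}
    (hgc : ConvexOn ℝ E g) (hgl : LowerSemicontinuousOn g E) {z0 : H} (hz0 : z0 ∈ E) :
    ∃ (l : H →L[ℝ] ℝ) (b : ℝ), ∀ z ∈ E, l z + b ≤ g z := by
  set S : Set (H × ℝ) := {p | p.1 ∈ E ∧ g p.1 ≤ p.2} with hS
  have hSconv : Convex ℝ S := by
    rintro ⟨p, pt⟩ ⟨hp, hpt⟩ ⟨q, qt⟩ ⟨hq, hqt⟩ a b ha hb hab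
    refine ⟨hgc.1 hp hq ha hb hab, ?_⟩
    calc g (a • p + b • q) ≤ a * g p + b * g q := hgc.2 hp hq ha hb hab
    _ ≤ a * pt + b * qt := by
        apply add_le_add
        · exact mul_le_mul_of_nonneg_left hpt ha
        · exact mul_le_mul_of_nonneg_left hqt hb
  have hScl : IsClosed S := by
    apply IsSeqClosed.isClosed
    rintro p ⟨z, t⟩ hmem htend
    have h1 : Tendsto (fun n => (p n).1) atTop (𝓝 z) := (continuous_fst.tendsto _).comp htend
    have h2 : Tendsto (fun n => (p n).2) atTop (𝓝 t) := (continuous_snd.tendsto _).comp htend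
    have hzE : z ∈ E := hEcl.isSeqClosed (fun n => (hmem n).1) h1
    refine ⟨hzE, ?_⟩
    by_contra hlt
    push_neg at hlt
    obtain ⟨b, hb1, hb2⟩ := exists_between hlt
    have h1' : Tendsto (fun n => (p n).1) atTop (𝓝[E] z) :=
      tendsto_nhdsWithin_of_tendsto_nhds_of_eventually_within _ h1
        (Eventually.of_forall fun n => (hmem n).1)
    have hev1 : ∀ᶠ n in atTop, b < g (p n).1 := h1' (hgl z hzE b hb2)
    have hev2 : ∀ᶠ n in atTop, (p n).2 < b := h2 (Iio_mem_nhds hb1) 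
    obtain ⟨n, hn1, hn2⟩ := (hev1.and hev2).exists
    exact absurd ((hmem n).2) (by push_neg; linarith)
  have hp0 : ((z0, g z0 - 1) : H × ℝ) ∉ S := by
    rintro ⟨-, h⟩; simp at h; linarith
  obtain ⟨Λ, u, hu, hup⟩ := geometric_hahn_banach_closed_point hSconv hScl hp0
  set c : ℝ := Λ (0, 1) with hc
  set l0 : H →L[ℝ] ℝ := Λ.comp (ContinuousLinearMap.inl ℝ H ℝ) with hl0
  have hdec : ∀ (z : H) (t : ℝ), Λ (z, t) = l0 z + t * c := by
    intro z t
    have : (z, t) = ((z, 0) : H × ℝ) + t • ((0 : H), (1 : ℝ)) := by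
      simp [Prod.ext_iff]
    rw [this, map_add, map_smul]
    simp [hl0, hc, mul_comm]
  have hmem0 : ∀ z ∈ E, ∀ t, g z ≤ t → l0 z + t * c < u := by
    intro z hz t ht
    have := hu (z, t) ⟨hz, ht⟩
    rwa [hdec] at this
  -- c is negative
  have hcneg : c < 0 := by
    rcases lt_trichotomy c 0 with h | h | h
    · exact h
    · exfalso
      have h1 := hmem0 z0 hz0 (g z0) (le_refl _)
      have h2 := hup
      rw [hdec] at h2
      rw [h] at h1 h2
      simp at h1 h2
      linarith
    · exfalso
      have hbig : ∀ m : ℝ, 0 ≤ m → l0 z0 + (g z0 + m) * c < u := fun m hm =>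
        hmem0 z0 hz0 _ (by linarith)
      have := hbig (max 0 ((u - l0 z0 - g z0 * c) / c) + 1) (by positivity)
      have hle : (u - l0 z0 - g z0 * c) / c ≤ max 0 ((u - l0 z0 - g z0 * c) / c) := le_max_right _ _
      have : (u - l0 z0 - g z0 * c) / c * c < (max 0 ((u - l0 z0 - g z0 * c) / c) + 1) * c := by
        apply mul_lt_mul_of_pos_right _ h
        linarith
      rw [div_mul_cancel₀ _ (ne_of_gt h)] at this
      nlinarith [hbig (max 0 ((u - l0 z0 - g z0 * c) / c) + 1) (by positivity)]
  refine ⟨(-(1/c)) • l0, u / c, ?_⟩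
  intro z hz
  have := hmem0 z hz (g z) (le_refl _)
  have hineq : (u - l0 z) / c ≤ g z := by
    rw [div_le_iff_of_neg hcneg]
    linarith [this]
  calc ((-(1/c)) • l0) z + u / c = (u - l0 z) / c := by
        simp [ContinuousLinearMap.smul_apply]
        ring
  _ ≤ g z := hineq

lemma inner_combo_identity (y x z1 z2 : H) {a b : ℝ} (hab : a + b = 1) :
    a * ⟪z1 - y, z1 - x⟫ + b * ⟪z2 - y, z2 - x⟫ - ⟪(a • z1 + b • z2) - y, (a • z1 + b • z2) - x⟫
      = a * b * ⟪z1 - z2, z1 - z2⟫ := by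
  have hb' : b = 1 - a := by linarith
  subst hb'
  have hcomm : ⟪z2, z1⟫ = ⟪z1, z2⟫ := real_inner_comm _ _
  have hcyx : ⟪y, z1⟫ = ⟪z1, y⟫ := real_inner_comm _ _
  simp only [inner_sub_left, inner_sub_right, inner_add_left, inner_add_right,
    real_inner_smul_left, real_inner_smul_right]
  rw [hcomm]
  ring

/-- The Minty set associated to a test point `y`. -/
def MintySet (E : Set H) (f : H → H → ℝ) (r : ℝ) (x y : H) : Set H :=
  {z ∈ E | r * f y z + ⟪z - y, z - x⟫ ≤ 0}

lemma mintySet_subset (E : Set H) (f : H → H → ℝ) (r : ℝ) (x y : H) :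
    MintySet E f r x y ⊆ E := fun _ hz => hz.1

lemma mintySet_convex {E : Set H} {f : H → H → ℝ} {r : ℝ} (hr : 0 ≤ r) (x y : H)
    (hconv : ConvexOn ℝ E (f y)) : Convex ℝ (MintySet E f r x y) := by
  rintro z1 ⟨hz1E, hz1⟩ z2 ⟨hz2E, hz2⟩ a b ha hb hab
  refine ⟨hconv.1 hz1E hz2E ha hb hab, ?_⟩
  have h1 : r * f y (a • z1 + b • z2) ≤ a * (r * f y z1) + b * (r * f y z2) := by
    have h := hconv.2 hz1E hz2E ha hb hab
    simp only [smul_eq_mul] at h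
    nlinarith [mul_le_mul_of_nonneg_left h hr]
  have h2 : ⟪(a • z1 + b • z2) - y, (a • z1 + b • z2) - x⟫
      ≤ a * ⟪z1 - y, z1 - x⟫ + b * ⟪z2 - y, z2 - x⟫ := by
    have hid := inner_combo_identity y x z1 z2 hab
    nlinarith [real_inner_self_nonneg (x := z1 - z2), mul_nonneg ha hb,
      mul_nonneg (mul_nonneg ha hb) (real_inner_self_nonneg (x := z1 - z2))]
  nlinarith [mul_nonneg ha (neg_nonneg.mpr hz1), mul_nonneg hb (neg_nonneg.mpr hz2)]

lemma mintySet_closed {E : Set H} {f : H → H → ℝ} {r : ℝ} (hr : 0 < r) (x y : H)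
    (hEcl : IsClosed E) (hlsc : LowerSemicontinuousOn (f y) E) :
    IsClosed (MintySet E f r x y) := by
  apply IsSeqClosed.isClosed
  intro p z hmem htend
  have hzE : z ∈ E := hEcl.isSeqClosed (fun n => (hmem n).1) htend
  refine ⟨hzE, ?_⟩
  by_contra hlt
  push_neg at hlt
  set Q : H → ℝ := fun w => ⟪w - y, w - x⟫ with hQ
  have hQc : Continuous Q := by
    apply Continuous.inner <;> fun_prop
  set ε : ℝ := r * f y z + Q z with hε
  have hεpos : 0 < ε := hlt
  have hb2 : f y z - ε / (2 * r) < f y z := by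
    have : 0 < ε / (2 * r) := by positivity
    linarith
  have h1' : Tendsto p atTop (𝓝[E] z) :=
    tendsto_nhdsWithin_of_tendsto_nhds_of_eventually_within _ htend
      (Eventually.of_forall fun n => (hmem n).1)
  have hev1 : ∀ᶠ n in atTop, f y z - ε / (2 * r) < f y (p n) :=
    h1' (hlsc z hzE _ hb2)
  have hev2 : ∀ᶠ n in atTop, Q (p n) > Q z - ε / 4 := by
    apply (hQc.tendsto z).comp htend |>.eventually
    apply eventually_gt_nhds
    linarith
  obtain ⟨n, hn1, hn2⟩ := (hev1.and hev2).exists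
  have hmn := (hmem n).2
  have hr2 : r * (ε / (2 * r)) = ε / 2 := by
    field_simp
  have := mul_lt_mul_of_pos_left hn1 hr
  rw [mul_sub, hr2] at this
  nlinarith

lemma mintySet_kkm_property {E : Set H} {f : H → H → ℝ} {r : ℝ} (hr : 0 < r) (x : H)
    (hEco : Convex ℝ E)
    (hA1 : ∀ y ∈ E, f y y = 0)
    (hA2 : ∀ y ∈ E, ∀ z ∈ E, f y z + f z y ≤ 0)
    (hA4c : ∀ y ∈ E, ConvexOn ℝ E (f y))
    (t : Finset H) (htE : (t : Set H) ⊆ E) :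
    ∀ z ∈ convexHull ℝ (t : Set H), ∃ y ∈ t, z ∈ MintySet E f r x y := by
  intro z hz
  have hzE : z ∈ E := convexHull_min htE hEco hz
  rw [Finset.convexHull_eq] at hz
  obtain ⟨w, hw0, hw1, hwz⟩ := hz
  rw [Finset.centerMass_eq_of_sum_1 _ _ hw1] at hwz
  simp only [id_eq] at hwz
  by_contra hcon
  push_neg at hcon
  have hpos : ∀ y ∈ t, 0 < r * f y z + ⟪z - y, z - x⟫ := by
    intro y hy
    have := hcon y hy
    simp only [MintySet, Set.mem_setOf_eq, not_and, not_le] at this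
    exact this hzE
  -- the inner-product part sums to zero
  have hsum_smul : ∑ y ∈ t, w y • (z - y) = 0 := by
    have h1 : ∑ y ∈ t, w y • (z - y) = (∑ y ∈ t, w y) • z - ∑ y ∈ t, w y • y := by
      rw [Finset.sum_smul, ← Finset.sum_sub_distrib]
      exact Finset.sum_congr rfl fun y _ => smul_sub _ _ _
    rw [h1, hw1, one_smul, hwz, sub_self]
  have hsum_inner : ∑ y ∈ t, w y * ⟪z - y, z - x⟫ = 0 := by
    have : ∑ y ∈ t, w y * ⟪z - y, z - x⟫ = ⟪∑ y ∈ t, w y • (z - y), z - x⟫ := by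
      rw [sum_inner]
      exact Finset.sum_congr rfl fun y _ => (real_inner_smul_left _ _ _).symm
    rw [this, hsum_smul, inner_zero_left]
  -- Jensen + monotonicity: the f part is nonpositive
  have hjensen : (0:ℝ) ≤ ∑ y ∈ t, w y * f z y := by
    have h := (hA4c z hzE).map_sum_le hw0 hw1 (fun y hy => htE hy)
    simp only [id_eq, smul_eq_mul] at h
    rw [hwz, hA1 z hzE] at h
    exact h
  have hsum_f : ∑ y ∈ t, w y * (r * f y z) ≤ 0 := by
    have h1 : ∀ y ∈ t, w y * (r * f y z) ≤ w y * (r * (- f z y)) := by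
      intro y hy
      apply mul_le_mul_of_nonneg_left _ (hw0 y hy)
      apply mul_le_mul_of_nonneg_left _ (le_of_lt hr)
      linarith [hA2 y (htE hy) z hzE]
    calc ∑ y ∈ t, w y * (r * f y z) ≤ ∑ y ∈ t, w y * (r * (- f z y)) :=
          Finset.sum_le_sum h1
    _ = - (r * ∑ y ∈ t, w y * f z y) := by
        rw [Finset.mul_sum, ← Finset.sum_neg_distrib]
        apply Finset.sum_congr rfl; intro y _; ring
    _ ≤ 0 := by
        have := mul_nonneg (le_of_lt hr) hjensen
        linarith
  -- but the total sum is positive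
  have htne : t.Nonempty := by
    by_contra h
    rw [Finset.not_nonempty_iff_eq_empty] at h
    rw [h] at hw1; simp at hw1
  obtain ⟨y₁, hy₁, hwy₁⟩ : ∃ y ∈ t, 0 < w y := by
    by_contra h
    push_neg at h
    have : ∑ y ∈ t, w y = 0 :=
      Finset.sum_eq_zero fun y hy => le_antisymm (h y hy) (hw0 y hy)
    rw [hw1] at this; norm_num at this
  have hterm : ∀ y ∈ t, 0 ≤ w y * (r * f y z + ⟪z - y, z - x⟫) :=
    fun y hy => mul_nonneg (hw0 y hy) (le_of_lt (hpos y hy))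
  have hy₁pos : 0 < w y₁ * (r * f y₁ z + ⟪z - y₁, z - x⟫) :=
    mul_pos hwy₁ (hpos y₁ hy₁)
  have htotal : 0 < ∑ y ∈ t, w y * (r * f y z + ⟪z - y, z - x⟫) :=
    lt_of_lt_of_le hy₁pos (Finset.single_le_sum hterm hy₁)
  have hsplit : ∑ y ∈ t, w y * (r * f y z + ⟪z - y, z - x⟫)
      = ∑ y ∈ t, w y * (r * f y z) + ∑ y ∈ t, w y * ⟪z - y, z - x⟫ := by
    rw [← Finset.sum_add_distrib]
    exact Finset.sum_congr rfl fun y _ => mul_add _ _ _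
  rw [hsplit, hsum_inner] at htotal
  linarith

lemma minty_finite [DecidableEq H] {E : Set H} {f : H → H → ℝ} {r : ℝ} (hr : 0 < r) (x : H)
    (hEcl : IsClosed E) (hEco : Convex ℝ E)
    (hA1 : ∀ y ∈ E, f y y = 0)
    (hA2 : ∀ y ∈ E, ∀ z ∈ E, f y z + f z y ≤ 0)
    (hA4c : ∀ y ∈ E, ConvexOn ℝ E (f y))
    (hA4l : ∀ y ∈ E, LowerSemicontinuousOn (f y) E)
    (F : Finset H) (hF : (F : Set H) ⊆ E) (hFne : F.Nonempty) :
    (⋂ y ∈ F, MintySet E f r x y).Nonempty := by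
  obtain ⟨z, _, hz⟩ := kkm F.card F (MintySet E f r x) rfl hFne
    (fun y hy => mintySet_closed hr x y hEcl (hA4l y (hF hy)))
    (fun y hy => mintySet_convex (le_of_lt hr) x y (hA4c y (hF hy)))
    (fun t ht => mintySet_kkm_property hr x hEco hA1 hA2 hA4c t
      ((Finset.coe_subset.mpr ht).trans hF))
  exact ⟨z, hz⟩

lemma quad_bound {u A B : ℝ} (hu : 0 ≤ u) (hA : 0 ≤ A) (h : u^2 ≤ A * u + B) :
    u ≤ A + max B 0 + 1 := by
  by_contra hc
  push_neg at hc
  have hB : B ≤ max B 0 := le_max_left _ _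
  have hmax : 0 ≤ max B 0 := le_max_right _ _
  nlinarith

lemma mintySet_bounded {E : Set H} {f : H → H → ℝ} {r : ℝ} (hr : 0 < r) (x : H)
    (hEcl : IsClosed E) {y0 : H} (hy0 : y0 ∈ E)
    (hconv : ConvexOn ℝ E (f y0)) (hlsc : LowerSemicontinuousOn (f y0) E) :
    ∃ R : ℝ, 0 ≤ R ∧ ∀ z ∈ MintySet E f r x y0, ‖z‖ ≤ R := by
  obtain ⟨l, b, hlb⟩ := exists_affine_minorant hEcl hconv hlsc hy0
  set A : ℝ := ‖x‖ + ‖y0‖ + r * ‖l‖ with hA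
  set B : ℝ := ‖y0‖ * ‖x‖ + r * |b| with hB
  refine ⟨A + max B 0 + 1, by positivity, ?_⟩
  rintro z ⟨hzE, hz⟩
  have hinner : ⟪z - y0, z - x⟫ = ⟪z, z⟫ - ⟪z, x⟫ - ⟪y0, z⟫ + ⟪y0, x⟫ := by
    simp [inner_sub_left, inner_sub_right]; ring
  have h1 : |⟪z, x⟫| ≤ ‖z‖ * ‖x‖ := abs_real_inner_le_norm _ _
  have h2 : |⟪y0, z⟫| ≤ ‖y0‖ * ‖z‖ := abs_real_inner_le_norm _ _
  have h3 : |⟪y0, x⟫| ≤ ‖y0‖ * ‖x‖ := abs_real_inner_le_norm _ _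
  have h4 : ⟪z, z⟫ = ‖z‖^2 := real_inner_self_eq_norm_sq _
  have h5 : |l z| ≤ ‖l‖ * ‖z‖ := by
    have := l.le_opNorm z
    rwa [Real.norm_eq_abs] at this
  have h6 : l z + b ≤ f y0 z := hlb z hzE
  have h7 : r * (l z + b) ≤ r * f y0 z := mul_le_mul_of_nonneg_left h6 (le_of_lt hr)
  have habs1 := abs_le.mp h1
  have habs2 := abs_le.mp h2
  have habs3 := abs_le.mp h3
  have habs5 := abs_le.mp h5
  have habsb : -|b| ≤ b := neg_abs_le b
  have hquad : ‖z‖^2 ≤ A * ‖z‖ + B := by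
    rw [hinner, h4] at hz
    have hrl : r * (-(‖l‖ * ‖z‖)) ≤ r * l z :=
      mul_le_mul_of_nonneg_left habs5.1 (le_of_lt hr)
    have hrb : r * (-|b|) ≤ r * b := mul_le_mul_of_nonneg_left habsb (le_of_lt hr)
    rw [hA, hB]
    nlinarith
  exact quad_bound (norm_nonneg z) (by positivity) hquad

set_option maxHeartbeats 1000000 in
lemma mid_est {p q : H} {dm ds en em : ℝ}
    (hp : ‖p‖ ≤ ds + en) (hq : ‖q‖ ≤ ds + em)
    (hmid : dm ≤ ‖(1/2 : ℝ) • (p + q)‖)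
    (hdm0 : 0 ≤ dm) (hds0 : 0 ≤ ds) (hdmlb : ds - em ≤ dm)
    (hen0 : 0 ≤ en) (henem : en ≤ em) (hem1 : em ≤ 1) :
    ‖p - q‖^2 ≤ (16 * ds + 32) * em := by
  have hpar := parallelogram_law_with_norm ℝ p q
  have hpar' : ‖p + q‖^2 + ‖p - q‖^2 = 2*(‖p‖^2 + ‖q‖^2) := by
    simpa [pow_two] using hpar
  have hsm : ‖(1/2 : ℝ) • (p + q)‖ = (1/2) * ‖p + q‖ := by
    rw [norm_smul]; norm_num
  rw [hsm] at hmid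
  have hpq : 2 * dm ≤ ‖p + q‖ := by linarith
  have hnn : 0 ≤ ‖p + q‖ := norm_nonneg _
  have h2 : 4 * dm^2 ≤ ‖p + q‖^2 := by nlinarith
  have hp2 : ‖p‖^2 ≤ (ds + en)^2 := by nlinarith [norm_nonneg p]
  have hq2 : ‖q‖^2 ≤ (ds + em)^2 := by nlinarith [norm_nonneg q]
  rcases le_or_gt em ds with hcase | hcase
  · have hsub : 0 ≤ ds - em := by linarith
    have : (ds - em)^2 ≤ dm^2 := by nlinarith
    nlinarith
  · have hem0 : 0 ≤ em := le_trans hen0 henem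
    have h3 : ‖p - q‖^2 ≤ 2*(ds + en)^2 + 2*(ds + em)^2 := by
      linarith [sq_nonneg ‖p + q‖]
    have h4 : (ds + en)^2 ≤ (ds + em)^2 :=
      pow_le_pow_left₀ (by linarith) (by linarith) 2
    have h5 : (ds + em)^2 ≤ (2*em)^2 :=
      pow_le_pow_left₀ (by linarith) (by linarith) 2
    have h6 : (2*em)^2 ≤ 4*em := by
      have h := mul_le_mul_of_nonneg_left hem1 hem0
      calc (2*em)^2 = 4*(em*em) := by ring
      _ ≤ 4*em := by linarith
    linarith [mul_nonneg hds0 hem0]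

lemma minty_exists [CompleteSpace H] {E : Set H} {f : H → H → ℝ} {r : ℝ} (hr : 0 < r) (x : H)
    (hEne : E.Nonempty) (hEcl : IsClosed E) (hEco : Convex ℝ E)
    (hA1 : ∀ y ∈ E, f y y = 0)
    (hA2 : ∀ y ∈ E, ∀ z ∈ E, f y z + f z y ≤ 0)
    (hA4c : ∀ y ∈ E, ConvexOn ℝ E (f y))
    (hA4l : ∀ y ∈ E, LowerSemicontinuousOn (f y) E) :
    ∃ z ∈ E, ∀ y ∈ E, r * f y z + ⟪z - y, z - x⟫ ≤ 0 := by
  classical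
  obtain ⟨y0, hy0⟩ := hEne
  obtain ⟨R, hR0, hRb⟩ := mintySet_bounded hr x hEcl hy0 (hA4c y0 hy0) (hA4l y0 hy0)
  set C : H → Set H := MintySet E f r x with hC
  set J : Finset H → Set H := fun F => ⋂ y ∈ insert y0 F, C y with hJ
  have hinsE : ∀ {F : Finset H}, (F : Set H) ⊆ E → ((insert y0 F : Finset H) : Set H) ⊆ E := by
    intro F hF
    rw [Finset.coe_insert]
    exact Set.insert_subset hy0 hF
  have hJne : ∀ F : Finset H, (F : Set H) ⊆ E → (J F).Nonempty := by
    intro F hF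
    exact minty_finite hr x hEcl hEco hA1 hA2 hA4c hA4l (insert y0 F) (hinsE hF)
      (Finset.insert_nonempty _ _)
  have hJC : ∀ F : Finset H, J F ⊆ C y0 := fun F =>
    Set.biInter_subset_of_mem (Finset.mem_insert_self _ _)
  have hJbound : ∀ F : Finset H, ∀ z ∈ J F, ‖z‖ ≤ R := fun F z hz => hRb z (hJC F hz)
  have hJanti : ∀ {F F' : Finset H}, F ⊆ F' → J F' ⊆ J F := by
    intro F F' hFF z hz
    exact Set.mem_biInter fun y hy =>
      Set.mem_iInter₂.mp hz y (Finset.insert_subset_insert _ hFF hy)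
  have hJconv : ∀ F : Finset H, (F : Set H) ⊆ E → Convex ℝ (J F) := by
    intro F hF
    apply convex_iInter₂
    intro y hy
    exact mintySet_convex (le_of_lt hr) x y (hA4c y (hinsE hF hy))
  set nrm : H → ℝ := fun z => ‖z‖ with hnrm
  set d : Finset H → ℝ := fun F => sInf (nrm '' J F) with hd
  have himne : ∀ F : Finset H, (F : Set H) ⊆ E → (nrm '' J F).Nonempty :=
    fun F hF => (hJne F hF).image _
  have hbdd : ∀ F : Finset H, BddBelow (nrm '' J F) :=
    fun F => ⟨0, by rintro t ⟨z, -, rfl⟩; exact norm_nonneg z⟩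
  have hd0 : ∀ F : Finset H, (F : Set H) ⊆ E → 0 ≤ d F := fun F hF =>
    le_csInf (himne F hF) (by rintro t ⟨z, -, rfl⟩; exact norm_nonneg z)
  have hdR : ∀ F : Finset H, (F : Set H) ⊆ E → d F ≤ R := by
    intro F hF
    obtain ⟨z, hz⟩ := hJne F hF
    exact le_trans (csInf_le (hbdd F) ⟨z, hz, rfl⟩) (hJbound F z hz)
  have hdmono : ∀ {F F' : Finset H}, F ⊆ F' → (F' : Set H) ⊆ E → d F ≤ d F' := by
    intro F F' h hF'
    exact csInf_le_csInf (hbdd F) (himne F' hF') (Set.image_mono (hJanti h))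
  have hdle : ∀ F : Finset H, (F : Set H) ⊆ E → ∀ z ∈ J F, d F ≤ ‖z‖ :=
    fun F _ z hz => csInf_le (hbdd F) ⟨z, hz, rfl⟩
  set T : Set ℝ := d '' {F : Finset H | (F : Set H) ⊆ E} with hT
  have hTne : T.Nonempty := ⟨d ∅, ∅, by simp, rfl⟩
  have hTbdd : BddAbove T := ⟨R, by rintro t ⟨F, hF, rfl⟩; exact hdR F hF⟩
  set ds : ℝ := sSup T with hds
  have hds0 : 0 ≤ ds :=
    le_trans (hd0 ∅ (by simp)) (le_csSup hTbdd ⟨∅, by simp, rfl⟩)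
  have hex : ∀ n : ℕ, ∃ F : Finset H, (F : Set H) ⊆ E ∧ ds - 1/(n+1) < d F := by
    intro n
    have h1 : ds - 1/(n+1 : ℝ) < ds := by
      have : (0:ℝ) < 1/(n+1) := by positivity
      linarith
    obtain ⟨t, ht, hlt⟩ := exists_lt_of_lt_csSup hTne h1
    obtain ⟨F, hF, rfl⟩ := ht
    exact ⟨F, hF, hlt⟩
  choose Fs hFsE hFsd using hex
  set G : ℕ → Finset H := fun n => (Finset.range (n+1)).biUnion Fs with hG
  have hGE : ∀ n, ((G n : Finset H) : Set H) ⊆ E := by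
    intro n z hz
    simp only [hG, Finset.coe_biUnion, Set.mem_iUnion] at hz
    obtain ⟨k, -, hk⟩ := hz
    exact hFsE k hk
  have hGmono : ∀ {m n : ℕ}, m ≤ n → G m ⊆ G n := by
    intro m n h
    exact Finset.biUnion_subset_biUnion_of_subset_left _ (Finset.range_subset_range.mpr (by omega))
  have hFG : ∀ n, Fs n ⊆ G n := fun n =>
    Finset.subset_biUnion_of_mem Fs (Finset.self_mem_range_succ n)
  have hdG_lb : ∀ n : ℕ, ds - 1/(n+1) < d (G n) :=
    fun n => lt_of_lt_of_le (hFsd n) (hdmono (hFG n) (hGE n))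
  have hdG_ub : ∀ n, d (G n) ≤ ds := fun n => le_csSup hTbdd ⟨G n, hGE n, rfl⟩
  have hpick : ∀ F : Finset H, (F : Set H) ⊆ E → ∀ ε : ℝ, 0 < ε →
      ∃ z, z ∈ J F ∧ ‖z‖ < d F + ε := by
    intro F hF ε hε
    obtain ⟨t, ht, hlt⟩ := Real.lt_sInf_add_pos (himne F hF) hε
    obtain ⟨z, hz, rfl⟩ := ht
    exact ⟨z, hz, hlt⟩
  have hpickn : ∀ n : ℕ, ∃ z, z ∈ J (G n) ∧ ‖z‖ < d (G n) + 1/(n+1) :=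
    fun n => hpick (G n) (hGE n) (1/(n+1)) (by positivity)
  choose p hpJ hpn using hpickn
  have hpb : ∀ n : ℕ, ‖p n‖ ≤ ds + 1/(n+1) :=
    fun n => le_of_lt (lt_of_lt_of_le (hpn n) (by linarith [hdG_ub n]))
  set K : ℝ := 16 * ds + 32 with hK
  have hKpos : 0 < K := by rw [hK]; linarith
  have hinv_mono : ∀ {m n : ℕ}, m ≤ n → (1:ℝ)/(n+1) ≤ 1/(m+1) := by
    intro m n h
    apply one_div_le_one_div_of_le (by positivity)
    have : (m:ℝ) ≤ n := Nat.cast_le.mpr h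
    linarith
  -- the key pair estimate
  have key : ∀ {w w' : H} {m n : ℕ}, m ≤ n → w ∈ J (G n) → w' ∈ J (G m) →
      ‖w‖ ≤ ds + 1/(n+1) → ‖w'‖ ≤ ds + 1/(m+1) → ‖w - w'‖^2 ≤ K * (1/(m+1)) := by
    intro w w' m n hmn hw hw' hwb hw'b
    have hwJm : w ∈ J (G m) := hJanti (hGmono hmn) hw
    have hmidJ : (1/2 : ℝ) • (w + w') ∈ J (G m) := by
      have h := (hJconv (G m) (hGE m)) hwJm hw' (by norm_num : (0:ℝ) ≤ 1/2)
        (by norm_num : (0:ℝ) ≤ 1/2) (by norm_num)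
      simpa [smul_add] using h
    have hmid : d (G m) ≤ ‖(1/2 : ℝ) • (w + w')‖ := hdle (G m) (hGE m) _ hmidJ
    exact mid_est hwb hw'b hmid (hd0 (G m) (hGE m)) hds0 (le_of_lt (hdG_lb m))
      (by positivity) (hinv_mono hmn) (by
        rw [div_le_one (by positivity)]
        have : (0:ℝ) ≤ m := Nat.cast_nonneg m
        linarith)
  have hsqrt_tend : Tendsto (fun N : ℕ => Real.sqrt (K * (1/(N+1)))) atTop (𝓝 0) := by
    have h1 : Tendsto (fun N : ℕ => K * (1/(N+1) : ℝ)) atTop (𝓝 0) := by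
      have := tendsto_one_div_add_atTop_nhds_zero_nat.const_mul K
      simpa using this
    have h2 := (Real.continuous_sqrt.tendsto 0).comp h1
    simpa [Function.comp_def] using h2
  have hcauchy : CauchySeq p := by
    apply cauchySeq_of_le_tendsto_0 (fun N : ℕ => Real.sqrt (K * (1/(N+1)))) _ hsqrt_tend
    intro n m N hn hm
    have hdist : ∀ {a b : ℕ}, a ≤ b → N ≤ a → dist (p b) (p a) ≤ Real.sqrt (K * (1/(N+1))) := by
      intro a b hab hNa
      rw [dist_eq_norm]
      have h1 : ‖p b - p a‖^2 ≤ K * (1/(a+1)) :=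
        key hab (hpJ b) (hpJ a) (hpb b) (hpb a)
      have h2 : K * (1/(a+1)) ≤ K * (1/(N+1)) :=
        mul_le_mul_of_nonneg_left (hinv_mono hNa) (le_of_lt hKpos)
      exact (Real.le_sqrt (norm_nonneg _) (by positivity)).mpr (le_trans h1 h2)
    rcases le_total m n with h | h
    · exact hdist h hm
    · rw [dist_comm]; exact hdist h hn
  obtain ⟨zs, hzs⟩ := cauchySeq_tendsto_of_complete hcauchy
  have hzsmem : ∀ y ∈ E, zs ∈ C y := by
    intro y hyE
    set G' : ℕ → Finset H := fun n => insert y (G n) with hG'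
    have hG'E : ∀ n, ((G' n : Finset H) : Set H) ⊆ E := by
      intro n
      rw [hG', Finset.coe_insert]
      exact Set.insert_subset hyE (hGE n)
    have hpickn' : ∀ n : ℕ, ∃ z, z ∈ J (G' n) ∧ ‖z‖ < d (G' n) + 1/(n+1) :=
      fun n => hpick (G' n) (hG'E n) (1/(n+1)) (by positivity)
    choose q hqJ hqn using hpickn'
    have hqb : ∀ n : ℕ, ‖q n‖ ≤ ds + 1/(n+1) := by
      intro n
      have hub : d (G' n) ≤ ds := le_csSup hTbdd ⟨G' n, hG'E n, rfl⟩
      exact le_of_lt (lt_of_lt_of_le (hqn n) (by linarith))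
    have hqGn : ∀ n, q n ∈ J (G n) := fun n =>
      hJanti (Finset.subset_insert _ _) (hqJ n)
    have key2 : ∀ n : ℕ, ‖q n - p n‖^2 ≤ K * (1/(n+1)) := fun n =>
      key (le_refl n) (hqGn n) (hpJ n) (hqb n) (hpb n)
    have hq_tend : Tendsto q atTop (𝓝 zs) := by
      rw [tendsto_iff_dist_tendsto_zero]
      apply squeeze_zero (fun n => dist_nonneg)
        (g := fun n : ℕ => Real.sqrt (K * (1/(n+1))) + dist (p n) zs)
      · intro n
        calc dist (q n) zs ≤ dist (q n) (p n) + dist (p n) zs := dist_triangle _ _ _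
        _ ≤ Real.sqrt (K * (1/(n+1))) + dist (p n) zs := by
            apply add_le_add_left
            rw [dist_eq_norm]
            exact (Real.le_sqrt (norm_nonneg _) (by positivity)).mpr (key2 n)
      · have h2 : Tendsto (fun n : ℕ => dist (p n) zs) atTop (𝓝 0) :=
          tendsto_iff_dist_tendsto_zero.mp hzs
        simpa using hsqrt_tend.add h2
    have hCycl : IsClosed (C y) := mintySet_closed hr x y hEcl (hA4l y hyE)
    exact hCycl.mem_of_tendsto hq_tend
      (Eventually.of_forall fun n =>
        Set.mem_iInter₂.mp (hqJ n) y (Finset.mem_insert_of_mem (Finset.mem_insert_self _ _)))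
  have hzsE : zs ∈ E := (hzsmem y0 hy0).1
  exact ⟨zs, hzsE, fun y hyE => (hzsmem y hyE).2⟩


end AuxiliaryLemmas

/-- Lemma 2.3: existence of a solution of the regularized equilibrium problem. -/
theorem stmt_6
    {H : Type*} [NormedAddCommGroup H] [InnerProductSpace ℝ H] [CompleteSpace H]
    (E : Set H) (hEne : E.Nonempty) (hEcl : IsClosed E) (hEco : Convex ℝ E)
    (f : H → H → ℝ)
    (hA1 : ∀ x ∈ E, f x x = 0)
    (hA2 : ∀ x ∈ E, ∀ y ∈ E, f x y + f y x ≤ 0)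
    (hA3 : ∀ x ∈ E, ∀ y ∈ E, ∀ z ∈ E,
      Filter.limsup (fun t : ℝ => f (t • z + (1 - t) • x) y) (nhdsWithin 0 (Set.Ioi 0)) ≤ f x y)
    (hA4c : ∀ x ∈ E, ConvexOn ℝ E (f x))
    (hA4l : ∀ x ∈ E, LowerSemicontinuousOn (f x) E)
    (r : ℝ) (hr : 0 < r) (x : H) :
    ∃ z ∈ E, ∀ y ∈ E, 0 ≤ f z y + (1 / r) * ⟪y - z, z - x⟫ := by
  obtain ⟨z, hzE, hminty⟩ := minty_exists hr x hEne hEcl hEco hA1 hA2 hA4c hA4l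
  refine ⟨z, hzE, ?_⟩
  intro y hyE
  set c : ℝ := ⟪y - z, z - x⟫ with hc
  obtain ⟨l, b, hlb⟩ := exists_affine_minorant hEcl (hA4c y hyE) (hA4l y hyE) hyE
  set u : ℝ → ℝ := fun t => f (t • y + (1 - t) • z) y with hu
  set L : Filter ℝ := nhdsWithin 0 (Set.Ioi 0) with hL
  have hIoo : Set.Ioo (0:ℝ) 1 ∈ L := Ioo_mem_nhdsGT_of_mem ⟨le_refl _, zero_lt_one⟩
  have hytE : ∀ t ∈ Set.Ioo (0:ℝ) 1, t • y + (1 - t) • z ∈ E := by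
    intro t ht
    exact hEco hyE hzE (le_of_lt ht.1) (by linarith [ht.2]) (by ring)
  -- lower bound on u t for t ∈ (0,1)
  have hlow : ∀ t ∈ Set.Ioo (0:ℝ) 1, -(1 - t) * c / r ≤ u t := by
    intro t ht
    set yt := t • y + (1 - t) • z with hyt
    have hytE' : yt ∈ E := hytE t ht
    have hm := hminty yt hytE'
    have hsub : z - yt = t • (z - y) := by rw [hyt]; module
    have hinner : ⟪z - yt, z - x⟫ = t * (-c) := by
      rw [hsub, real_inner_smul_left]
      congr 1
      rw [hc, ← inner_neg_left, neg_sub]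
    rw [hinner] at hm
    -- r * f yt z ≤ t * c
    have hfytz : f yt z ≤ t * c / r := by
      rw [le_div_iff₀ hr]
      nlinarith
    have hjen : (0:ℝ) ≤ t * f yt y + (1 - t) * f yt z := by
      have h := (hA4c yt hytE').2 hyE hzE (le_of_lt ht.1 : (0:ℝ) ≤ t)
        (by linarith [ht.2] : (0:ℝ) ≤ 1 - t) (by ring : t + (1 - t) = (1:ℝ))
      rw [← hyt] at h
      rw [hA1 yt hytE'] at h
      simpa [smul_eq_mul] using h
    have h1t : 0 ≤ 1 - t := by linarith [ht.2]
    have h2 : (1 - t) * f yt z ≤ (1 - t) * (t * c / r) :=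
      mul_le_mul_of_nonneg_left hfytz h1t
    have h4 : -((1 - t) * (t * c / r)) ≤ t * f yt y := by linarith
    have hident : t * (-(1 - t) * c / r) = -((1 - t) * (t * c / r)) := by
      field_simp
    have h6 : t * (-(1 - t) * c / r) ≤ t * f yt y := by rw [hident]; exact h4
    have h7 := le_of_mul_le_mul_left h6 ht.1
    simp only [hu]
    rw [← hyt]
    exact h7
  -- upper bound for u on (0,1): f is bounded above along the segment
  set M : ℝ := ‖l‖ * (‖y‖ + ‖z‖) - b with hM
  have hup : ∀ t ∈ Set.Ioo (0:ℝ) 1, u t ≤ M := by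
    intro t ht
    set yt := t • y + (1 - t) • z with hyt
    have hytE' : yt ∈ E := hytE t ht
    have h1 : u t ≤ - f y yt := by
      have := hA2 yt hytE' y hyE
      simp only [hu]
      linarith
    have h2 : l yt + b ≤ f y yt := hlb yt hytE'
    have h3 : ‖yt‖ ≤ ‖y‖ + ‖z‖ := by
      calc ‖yt‖ ≤ ‖t • y‖ + ‖(1 - t) • z‖ := norm_add_le _ _
      _ = |t| * ‖y‖ + |1 - t| * ‖z‖ := by rw [norm_smul, norm_smul]; simp [Real.norm_eq_abs]
      _ ≤ 1 * ‖y‖ + 1 * ‖z‖ := by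
          apply add_le_add
          · apply mul_le_mul_of_nonneg_right _ (norm_nonneg _)
            rw [abs_of_pos ht.1]; exact le_of_lt ht.2
          · apply mul_le_mul_of_nonneg_right _ (norm_nonneg _)
            rw [abs_of_nonneg (by linarith [ht.2] : (0:ℝ) ≤ 1 - t)]
            linarith [ht.1]
      _ = ‖y‖ + ‖z‖ := by ring
    have h4 : |l yt| ≤ ‖l‖ * ‖yt‖ := by
      have := l.le_opNorm yt
      rwa [Real.norm_eq_abs] at this
    have h5 : -(‖l‖ * (‖y‖ + ‖z‖)) ≤ l yt := by
      have habs := (abs_le.mp h4).1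
      have h6 : ‖l‖ * ‖yt‖ ≤ ‖l‖ * (‖y‖ + ‖z‖) :=
        mul_le_mul_of_nonneg_left h3 (norm_nonneg _)
      linarith
    rw [hM]
    linarith
  have hbound : Filter.IsBoundedUnder (· ≤ ·) L u :=
    ⟨M, Filter.eventually_map.mpr (Filter.mem_of_superset hIoo fun t ht => hup t ht)⟩
  -- conclude via limsup
  have hlimsup := hA3 z hzE y hyE y hyE
  have hfinal : ∀ ε : ℝ, 0 < ε → -c / r - ε ≤ f z y := by
    intro ε hε
    set δ : ℝ := min 1 (ε * r / (|c| + 1)) with hδ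
    have hδpos : 0 < δ := by
      apply lt_min zero_lt_one
      positivity
    have hIoδ : Set.Ioo (0:ℝ) δ ∈ L := Ioo_mem_nhdsGT_of_mem ⟨le_refl _, hδpos⟩
    have hev : ∀ᶠ t in L, -c / r - ε ≤ u t := by
      filter_upwards [hIoδ] with t ht
      have ht1 : t ∈ Set.Ioo (0:ℝ) 1 :=
        ⟨ht.1, lt_of_lt_of_le ht.2 (min_le_left _ _)⟩
      have h1 := hlow t ht1
      -- -(1-t) * c / r ≥ -c/r - ε   i.e.  t * c / r ≥ -ε
      have h2 : t * |c| / r ≤ ε := by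
        have ht2 : t ≤ ε * r / (|c| + 1) := le_of_lt (lt_of_lt_of_le ht.2 (min_le_right _ _))
        rw [div_le_iff₀ hr]
        calc t * |c| ≤ (ε * r / (|c| + 1)) * |c| :=
              mul_le_mul_of_nonneg_right ht2 (abs_nonneg c)
        _ ≤ ε * r := by
            rw [div_mul_eq_mul_div, div_le_iff₀ (by positivity : (0:ℝ) < |c| + 1)]
            nlinarith [abs_nonneg c]
      have h3 : -(t * |c|) ≤ t * c := by
        have := neg_abs_le c
        nlinarith [le_of_lt ht.1]
      have h4 : -(1 - t) * c / r = -c/r + t * c / r := by ring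
      have h5 : -(t * |c|) / r ≤ t * c / r := (div_le_div_iff_of_pos_right hr).mpr h3
      rw [neg_div] at h5
      linarith
    calc -c / r - ε ≤ Filter.limsup u L :=
          Filter.le_limsup_of_frequently_le hev.frequently hbound
    _ ≤ f z y := hlimsup
  have h7 : -c / r ≤ f z y := by
    apply le_of_forall_pos_le_add
    intro ε hε
    linarith [hfinal ε hε]
  have h8 : (1 / r) * c = c / r := by ring
  rw [h8]
  rw [neg_div] at h7
  linarith
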